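/- Let f : ZMod 4 → Fin 3 be a cyclic word containing the color p exactly twice, the color r exactly once, and the color b exactly once. Then f can be extended, by inserting one new element of color r and one new element of color b at cyclically consecutive positions, to a cyclic word of length 6 satisfying the P3-constraint if and only if the two occurrences of p are cyclically adjacent in f. Consequently, the K3^{-(r,b)}-constraint and the P3^{-(r,b)}-constraint are equivalent. -/
import Mathlib


namespace SATR

def red : Fin 3 := 0
def blue : Fin 3 := 1
def purple : Fin 3 := 2

/-- `x` lies strictly inside the cyclic arc from `a` to `c` (in the `+1` direction). -/
def arcBetween {n : ℕ} [NeZero n] (a x c : ZMod n) : Prop :=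
  0 < (x - a).val ∧ (x - a).val < (c - a).val

/-- Colors `c` and `c'` alternate in the cyclic word `f`: there are two positions of
color `c` such that each of the two open cyclic arcs they determine contains a
position of color `c'`. -/
def Alternates {n : ℕ} [NeZero n] (f : ZMod n → Fin 3) (c c' : Fin 3) : Prop :=
  ∃ i1 i2 j1 j2 : ZMod n, f i1 = c ∧ f i2 = c ∧ i1 ≠ i2 ∧
    f j1 = c' ∧ f j2 = c' ∧ arcBetween i1 j1 i2 ∧ arcBetween i2 j2 i1

/-- The K3-constraint: all three pairs of distinct colors alternate. -/
def K3Constraint (w : ZMod 6 → Fin 3) : Prop :=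
  Alternates w red blue ∧ Alternates w red purple ∧ Alternates w blue purple

/-- The P3-constraint: r–p and b–p alternate, r–b do not. -/
def P3Constraint (w : ZMod 6 → Fin 3) : Prop :=
  Alternates w red purple ∧ Alternates w blue purple ∧ ¬ Alternates w red blue

/-- Number of occurrences of color `c` in the cyclic word `f`. -/
def count {n : ℕ} [NeZero n] (f : ZMod n → Fin 3) (c : Fin 3) : ℕ :=
  (Finset.univ.filter fun i => f i = c).card

/-- Insert a new element of color `c` into the gap right after position `g`. -/
def insertAt {n : ℕ} [NeZero n] (f : ZMod n → Fin 3) (g : ZMod n) (c : Fin 3) :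
    ZMod (n + 1) → Fin 3 :=
  fun j =>
    if j.val = g.val + 1 then c
    else if j.val ≤ g.val then f (j.val : ZMod n)
    else f ((j.val - 1 : ℕ) : ZMod n)

/-- Insert `c1` right after position `g`, and `c2` immediately (cyclically) after `c1`,
so the two new elements are cyclically consecutive. -/
def insertPair {n : ℕ} [NeZero n] (f : ZMod n → Fin 3) (g : ZMod n) (c1 c2 : Fin 3) :
    ZMod (n + 2) → Fin 3 :=
  insertAt (insertAt f g c1) ((g.val + 1 : ℕ) : ZMod (n + 1)) c2

/-- The cyclic distance between two positions: the minimum of the two arc lengths. -/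
def cycDist {n : ℕ} [NeZero n] (i j : ZMod n) : ℕ :=
  min (j - i).val (i - j).val


instance {n : ℕ} [NeZero n] (a x c : ZMod n) : Decidable (arcBetween a x c) := by
  unfold arcBetween; infer_instance
instance {n : ℕ} [NeZero n] (f : ZMod n → Fin 3) (c c' : Fin 3) : Decidable (Alternates f c c') :=
  decidable_of_iff
    (∃ i1 ∈ Finset.univ.filter (fun i => f i = c),
     ∃ i2 ∈ Finset.univ.filter (fun i => f i = c),
     ∃ j1 ∈ Finset.univ.filter (fun i => f i = c'),
     ∃ j2 ∈ Finset.univ.filter (fun i => f i = c'),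
      i1 ≠ i2 ∧ arcBetween i1 j1 i2 ∧ arcBetween i2 j2 i1)
    (by
      unfold Alternates
      simp only [Finset.mem_filter, Finset.mem_univ, true_and]
      constructor
      · rintro ⟨i1, h1, i2, h2, j1, h3, j2, h4, hne, ha, hb⟩
        exact ⟨i1, i2, j1, j2, h1, h2, hne, h3, h4, ha, hb⟩
      · rintro ⟨i1, i2, j1, j2, h1, h2, hne, h3, h4, ha, hb⟩
        exact ⟨i1, h1, i2, h2, j1, h3, j2, h4, hne, ha, hb⟩)
instance (w : ZMod 6 → Fin 3) : Decidable (K3Constraint w) := by unfold K3Constraint; infer_instance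
instance (w : ZMod 6 → Fin 3) : Decidable (P3Constraint w) := by unfold P3Constraint; infer_instance

set_option maxHeartbeats 16000000
set_option maxRecDepth 100000

/-- The P3^{-(r,b)}-constraint: a length-4 cyclic word with two purples, one red and
one blue can be extended to a P3-satisfying length-6 word by inserting one red and
one blue at cyclically consecutive positions iff the two purples are cyclically
adjacent; consequently the K3^{-(r,b)}- and P3^{-(r,b)}-constraints are equivalent. -/
theorem p3_minus_rb_iff_purples_adjacent
    (f : ZMod 4 → Fin 3)
    (hp : count f purple = 2) (hr : count f red = 1) (hb : count f blue = 1) :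
    ((∃ g : ZMod 4,
        P3Constraint (insertPair f g red blue) ∨ P3Constraint (insertPair f g blue red)) ↔
      (∃ i : ZMod 4, f i = purple ∧ f (i + 1) = purple)) ∧
    ((∃ g : ZMod 4,
        P3Constraint (insertPair f g red blue) ∨ P3Constraint (insertPair f g blue red)) ↔
      (∃ g : ZMod 4,
        K3Constraint (insertPair f g red blue) ∨ K3Constraint (insertPair f g blue red))) := by
  obtain ⟨a, b, c, d, hf⟩ :
      ∃ a b c d : Fin 3, f = fun i : ZMod 4 => ![a, b, c, d] ⟨i.val, i.val_lt⟩ :=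
    ⟨f 0, f 1, f 2, f 3, by funext i; fin_cases i <;> rfl⟩
  subst hf
  revert hp hr hb
  fin_cases a <;> fin_cases b <;> fin_cases c <;> fin_cases d <;> decide

end SATR
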